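/- Fix an integer p ≥ 2 and f ∈ 𝓕, and define g_f(κ) := ( ∫_{−1}^{1} s² (1−s²)^{(p−3)/2} f(κ s²) ds ) / ( ∫_{−1}^{1} (1−s²)^{(p−3)/2} f(κ s²) ds ) for κ in a neighbourhood of 0. Then g_f is differentiable at κ = 0 with g_f(0) = 1/p and g_f'(0) = 2(p−1)/(p²(p+2)) > 0. -/

import Mathlib

open MeasureTheory Filter Real
open Set intervalIntegral
open scoped Topology NNReal

noncomputable section

/-- `g_f(κ) = (∫_{-1}^1 s²(1-s²)^{(p-3)/2} f(κs²) ds) / (∫_{-1}^1 (1-s²)^{(p-3)/2} f(κs²) ds)`,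
the expectation of `(X'θ)²` under the axial density with concentration `κ`. -/
def gOf (p : ℕ) (f : ℝ → ℝ) (κ : ℝ) : ℝ :=
  (∫ s in (-1:ℝ)..1, s ^ 2 * (1 - s ^ 2) ^ (((p : ℝ) - 3) / 2) * f (κ * s ^ 2)) /
    (∫ s in (-1:ℝ)..1, (1 - s ^ 2) ^ (((p : ℝ) - 3) / 2) * f (κ * s ^ 2))

lemma aesm_aux {β : ℝ} (n : ℕ) :
    AEStronglyMeasurable (fun s : ℝ => s ^ n * (1 - s ^ 2) ^ β)
      (volume.restrict (Set.uIoc (-1:ℝ) 1)) := by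
  have h : ContinuousOn (fun s : ℝ => s ^ n * (1 - s ^ 2) ^ β) (Set.Ioo (-1:ℝ) 1) := by
    apply ContinuousOn.mul ((continuous_pow n).continuousOn)
    apply ContinuousOn.rpow_const ((continuous_const.sub (continuous_pow 2)).continuousOn)
    intro x hx
    left
    show (1:ℝ) - x ^ 2 ≠ 0
    nlinarith [hx.1, hx.2]
  have h2 : AEStronglyMeasurable (fun s : ℝ => s ^ n * (1 - s ^ 2) ^ β)
      (volume.restrict (Set.Ioo (-1:ℝ) 1)) :=
    h.aestronglyMeasurable measurableSet_Ioo
  rw [Set.uIoc_of_le (by norm_num : (-1:ℝ) ≤ 1)]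
  rwa [← Measure.restrict_congr_set Ioo_ae_eq_Ioc]

lemma integrable_aux {β : ℝ} (hβ : -1 < β) (n : ℕ) :
    IntervalIntegrable (fun s : ℝ => s ^ n * (1 - s ^ 2) ^ β) volume (-1) 1 := by
  set C : ℝ := Real.exp (|β| * Real.log 2) with hC
  have hC0 : 0 ≤ C := (Real.exp_pos _).le
  have hB : IntervalIntegrable (fun s : ℝ => C * ((1 - s) ^ β + (1 + s) ^ β))
      volume (-1) 1 := by
    have h1 : IntervalIntegrable (fun x : ℝ => x ^ β) volume 0 2 :=
      intervalIntegrable_rpow' hβ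
    have h2 : IntervalIntegrable (fun x : ℝ => (1 - x) ^ β) volume (-1) 1 := by
      have := (h1.comp_sub_left 1).symm
      norm_num at this
      exact this
    have h3 : IntervalIntegrable (fun x : ℝ => (1 + x) ^ β) volume (-1) 1 := by
      have := h1.comp_add_right 1
      norm_num at this
      simpa [add_comm] using this
    exact (h2.add h3).const_mul C
  refine hB.mono_fun (aesm_aux n) ?_
  rw [Filter.EventuallyLE, ae_restrict_iff' measurableSet_uIoc]
  apply ae_of_all
  intro s hs
  rw [Set.uIoc_of_le (by norm_num : (-1:ℝ) ≤ 1)] at hs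
  obtain ⟨hs1, hs2⟩ := hs
  have h1s : (0:ℝ) ≤ 1 - s := by linarith
  have h1s' : (0:ℝ) ≤ 1 + s := by linarith
  have key : (1 - s ^ 2) ^ β ≤ C * ((1 - s) ^ β + (1 + s) ^ β) := by
    have hprod : (1 - s ^ 2 : ℝ) = (1 - s) * (1 + s) := by ring
    rw [hprod, Real.mul_rpow h1s h1s']
    have hexp : ∀ x : ℝ, 1 ≤ x → x ≤ 2 → x ^ β ≤ C := by
      intro x hx1 hx2
      have hx0 : (0:ℝ) < x := by linarith
      rw [Real.rpow_def_of_pos hx0, hC]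
      apply Real.exp_le_exp.2
      have hlog : 0 ≤ Real.log x := Real.log_nonneg hx1
      have hlog2 : Real.log x ≤ Real.log 2 := Real.log_le_log hx0 hx2
      calc Real.log x * β ≤ |Real.log x * β| := le_abs_self _
        _ = |β| * |Real.log x| := by rw [abs_mul, mul_comm]
        _ ≤ |β| * Real.log 2 := by
            apply mul_le_mul_of_nonneg_left _ (abs_nonneg β)
            rwa [abs_of_nonneg hlog]
    rcases le_or_gt 0 s with hs0 | hs0
    · have hle : (1 + s) ^ β ≤ C := hexp _ (by linarith) (by linarith)
      have h2 : (1 - s) ^ β * (1 + s) ^ β ≤ (1 - s) ^ β * C :=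
        mul_le_mul_of_nonneg_left hle (Real.rpow_nonneg h1s β)
      nlinarith [Real.rpow_nonneg h1s β, Real.rpow_nonneg h1s' β]
    · have hle : (1 - s) ^ β ≤ C := hexp _ (by linarith) (by linarith)
      have h2 : (1 - s) ^ β * (1 + s) ^ β ≤ C * (1 + s) ^ β :=
        mul_le_mul_of_nonneg_right hle (Real.rpow_nonneg h1s' β)
      nlinarith [Real.rpow_nonneg h1s β, Real.rpow_nonneg h1s' β]
  have hsq : (0:ℝ) ≤ 1 - s ^ 2 := by nlinarith
  have habs : |s| ≤ 1 := abs_le.2 ⟨hs1.le, hs2⟩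
  calc ‖s ^ n * (1 - s ^ 2) ^ β‖ = |s| ^ n * (1 - s ^ 2) ^ β := by
        rw [norm_mul, norm_pow, Real.norm_eq_abs, Real.norm_eq_abs,
          abs_of_nonneg (Real.rpow_nonneg hsq β)]
    _ ≤ 1 * (1 - s ^ 2) ^ β := by
        apply mul_le_mul_of_nonneg_right _ (Real.rpow_nonneg hsq β)
        exact pow_le_one₀ (abs_nonneg s) habs
    _ ≤ C * ((1 - s) ^ β + (1 + s) ^ β) := by rw [one_mul]; exact key
    _ ≤ ‖C * ((1 - s) ^ β + (1 + s) ^ β)‖ := le_abs_self _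

lemma ibp_aux {α : ℝ} (hα : -1 < α) (n : ℕ) :
    ((n:ℝ) + 1) * ∫ s in (-1:ℝ)..1, s ^ n * (1 - s ^ 2) ^ α
      = ((n:ℝ) + 2 * α + 3) * ∫ s in (-1:ℝ)..1, s ^ (n + 2) * (1 - s ^ 2) ^ α := by
  have hα1 : (0:ℝ) < α + 1 := by linarith
  set F : ℝ → ℝ := fun s => s ^ (n + 1) * (1 - s ^ 2) ^ (α + 1) with hF
  set F' : ℝ → ℝ := fun s =>
    ((n:ℝ) + 1) * (s ^ n * (1 - s ^ 2) ^ (α + 1))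
      - (2 * (α + 1)) * (s ^ (n + 2) * (1 - s ^ 2) ^ α) with hF'
  have hderiv : ∀ x ∈ Set.Ioo (-1:ℝ) 1, HasDerivAt F (F' x) x := by
    intro x hx
    have hpos : (0:ℝ) < 1 - x ^ 2 := by nlinarith [hx.1, hx.2]
    have h1 : HasDerivAt (fun s : ℝ => 1 - s ^ 2) (-(2 * x ^ 1)) x :=
      (hasDerivAt_pow 2 x).const_sub 1
    have h2 : HasDerivAt (fun y : ℝ => y ^ (α + 1))
        ((α + 1) * (1 - x ^ 2) ^ (α + 1 - 1)) (1 - x ^ 2) :=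
      Real.hasDerivAt_rpow_const (Or.inl hpos.ne')
    have h3 := (h2.comp x h1).const_mul (1:ℝ)
    have h4 : HasDerivAt (fun s : ℝ => (1 - s ^ 2) ^ (α + 1))
        ((α + 1) * (1 - x ^ 2) ^ α * (-(2 * x ^ 1))) x := by
      have := h2.comp x h1
      refine this.congr_deriv ?_
      simp only [add_sub_cancel_right]
    have h5 := (hasDerivAt_pow (n + 1) x).mul h4
    refine h5.congr_deriv ?_
    have hrw : (1 - x ^ 2) ^ (α + 1) = (1 - x ^ 2) * (1 - x ^ 2) ^ α := by
      rw [Real.rpow_add hpos, Real.rpow_one, mul_comm]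
    rw [hF']
    simp only [Nat.add_sub_cancel, Nat.cast_add, Nat.cast_one]
    rw [hrw]
    ring
  have hint : IntervalIntegrable F' volume (-1) 1 := by
    have i1 := (integrable_aux (by linarith : (-1:ℝ) < α + 1) n).const_mul ((n:ℝ) + 1)
    have i2 := (integrable_aux hα (n + 2)).const_mul (2 * (α + 1))
    exact i1.sub i2
  have hcont : ∀ c : ℝ, c ∈ ({-1, 1} : Set ℝ) → Filter.Tendsto F (𝓝 c) (𝓝 0) := by
    intro c hc
    have hc2 : 1 - c ^ 2 = 0 := by
      rcases hc with h | h <;> (rw [h]; ring)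
    have hcont : ContinuousAt (fun y : ℝ => y ^ (α + 1)) ((1:ℝ) - c ^ 2) := by
      rw [hc2]
      exact Real.continuousAt_rpow_const 0 _ (Or.inr (by linarith))
    have hmul : ContinuousAt (fun s : ℝ => (1 - s ^ 2) ^ (α + 1)) c := by
      have hin : ContinuousAt (fun s : ℝ => 1 - s ^ 2) c :=
        (continuous_const.sub (continuous_pow 2)).continuousAt
      exact ContinuousAt.comp (g := fun y : ℝ => y ^ (α + 1))
        (f := fun s : ℝ => 1 - s ^ 2) (x := c) hcont hin
    have : ContinuousAt F c := ((continuous_pow (n + 1)).continuousAt.mul hmul)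
    have hF0 : F c = 0 := by
      simp only [hF, hc2, Real.zero_rpow hα1.ne', mul_zero]
    rw [← hF0]
    exact this.tendsto
  have h0 : ∫ s in (-1:ℝ)..1, F' s = 0 := by
    rw [integral_eq_sub_of_hasDerivAt_of_tendsto (by norm_num : (-1:ℝ) < 1) hderiv hint
      ((hcont (-1) (by simp)).mono_left nhdsWithin_le_nhds)
      ((hcont 1 (by simp)).mono_left nhdsWithin_le_nhds)]
    ring
  have hcongr : ∀ s ∈ Set.uIcc (-1:ℝ) 1, F' s =
      ((n:ℝ) + 1) * (s ^ n * (1 - s ^ 2) ^ α)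
        - (((n:ℝ) + 1) + 2 * (α + 1)) * (s ^ (n + 2) * (1 - s ^ 2) ^ α) := by
    intro s hs
    rw [Set.uIcc_of_le (by norm_num : (-1:ℝ) ≤ 1)] at hs
    have hsq : (0:ℝ) ≤ 1 - s ^ 2 := by nlinarith [hs.1, hs.2]
    have hrw : (1 - s ^ 2) ^ (α + 1) = (1 - s ^ 2) * (1 - s ^ 2) ^ α := by
      rcases eq_or_lt_of_le hsq with h | h
      · rw [← h, Real.zero_rpow hα1.ne', zero_mul]
      · rw [Real.rpow_add h, Real.rpow_one, mul_comm]
    show ((n:ℝ) + 1) * (s ^ n * (1 - s ^ 2) ^ (α + 1))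
        - (2 * (α + 1)) * (s ^ (n + 2) * (1 - s ^ 2) ^ α) = _
    rw [hrw]
    ring
  rw [intervalIntegral.integral_congr hcongr] at h0
  have i1 := integrable_aux hα n
  have i2 := integrable_aux hα (n + 2)
  rw [intervalIntegral.integral_sub (i1.const_mul _) (i2.const_mul _),
    intervalIntegral.integral_const_mul, intervalIntegral.integral_const_mul] at h0
  linarith [h0]

lemma hasDerivAt_aux {α : ℝ} (hα : -1 < α) (f : ℝ → ℝ) (hf_mono : Monotone f)
    (hf_diff : ∀ᶠ x in 𝓝 (0:ℝ), DifferentiableAt ℝ f x)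
    (hf_diff2 : DifferentiableAt ℝ (deriv f) 0) (n : ℕ) :
    HasDerivAt (fun κ : ℝ => ∫ s in (-1:ℝ)..1, s ^ n * (1 - s ^ 2) ^ α * f (κ * s ^ 2))
      (deriv f 0 * ∫ s in (-1:ℝ)..1, s ^ (n + 2) * (1 - s ^ 2) ^ α) 0 := by
  set C : ℝ := |deriv f 0| + 1 with hCdef
  have hC0 : 0 < C := by positivity
  have hev : ∀ᶠ x in 𝓝 (0:ℝ), DifferentiableAt ℝ f x ∧ |deriv f x| ≤ C :=
    hf_diff.and ((hf_diff2.continuousAt.abs.eventually_lt_const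
      (lt_add_one _)).mono fun x hx => hx.le)
  obtain ⟨δ, hδ0, hδ⟩ := Metric.eventually_nhds_iff.1 hev
  have hball : ∀ x ∈ Metric.ball (0:ℝ) δ, DifferentiableAt ℝ f x ∧ |deriv f x| ≤ C := by
    intro x hx
    exact hδ (by simpa [Real.dist_eq] using hx)
  -- f is Lipschitz on the ball
  have hlipf : LipschitzOnWith (Real.nnabs C) f (Metric.ball (0:ℝ) δ) := by
    apply (convex_ball (0:ℝ) δ).lipschitzOnWith_of_nnnorm_deriv_le
      (fun x hx => (hball x hx).1)
    intro x hx
    have h := (hball x hx).2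
    rw [← NNReal.coe_le_coe, coe_nnnorm, Real.coe_nnabs, Real.norm_eq_abs]
    calc |deriv f x| ≤ C := h
      _ ≤ |C| := le_abs_self C
  have hf0diff : DifferentiableAt ℝ f 0 := (hball 0 (Metric.mem_ball_self hδ0)).1
  -- apply differentiation under the integral sign
  have main := intervalIntegral.hasDerivAt_integral_of_dominated_loc_of_lip
    (F := fun κ s => s ^ n * (1 - s ^ 2) ^ α * f (κ * s ^ 2))
    (F' := fun s => deriv f 0 * (s ^ (n + 2) * (1 - s ^ 2) ^ α))
    (a := -1) (b := 1) (x₀ := (0:ℝ)) (μ := volume)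
    (bound := fun s => C * (s ^ n * (1 - s ^ 2) ^ α)) (Metric.ball_mem_nhds 0 hδ0)
    ?_ ?_ ?_ ?_ ?_ ?_
  · rcases main with ⟨-, h⟩
    rwa [intervalIntegral.integral_const_mul] at h
  · -- measurability of F x
    apply Filter.Eventually.of_forall
    intro x
    apply AEStronglyMeasurable.mul (aesm_aux n)
    exact ((hf_mono.measurable.comp
      (measurable_const.mul (measurable_id.pow_const 2))).aestronglyMeasurable)
  · -- integrability at 0
    have := (integrable_aux hα n).mul_const (f 0)
    apply IntervalIntegrable.congr_ae this
    apply ae_of_all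
    intro s
    simp [mul_assoc]
  · -- measurability of F'
    exact (aesm_aux (n + 2)).const_smul (deriv f 0)
  · -- Lipschitz
    apply ae_of_all
    intro t ht
    rw [Set.uIoc_of_le (by norm_num : (-1:ℝ) ≤ 1)] at ht
    have ht2 : t ^ 2 ≤ 1 := by nlinarith [ht.1, ht.2]
    have ht2' : (0:ℝ) ≤ t ^ 2 := sq_nonneg t
    rw [lipschitzOnWith_iff_dist_le_mul]
    intro x hx y hy
    have hxmem : x * t ^ 2 ∈ Metric.ball (0:ℝ) δ := by
      rw [Metric.mem_ball, Real.dist_eq, sub_zero] at hx ⊢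
      calc |x * t ^ 2| = |x| * t ^ 2 := by rw [abs_mul, abs_of_nonneg ht2']
        _ ≤ |x| * 1 := mul_le_mul_of_nonneg_left ht2 (abs_nonneg x)
        _ < δ := by rwa [mul_one]
    have hymem : y * t ^ 2 ∈ Metric.ball (0:ℝ) δ := by
      rw [Metric.mem_ball, Real.dist_eq, sub_zero] at hy ⊢
      calc |y * t ^ 2| = |y| * t ^ 2 := by rw [abs_mul, abs_of_nonneg ht2']
        _ ≤ |y| * 1 := mul_le_mul_of_nonneg_left ht2 (abs_nonneg y)
        _ < δ := by rwa [mul_one]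
    have hl := hlipf.dist_le_mul _ hxmem _ hymem
    rw [Real.dist_eq, Real.dist_eq] at hl
    show |t ^ n * (1 - t ^ 2) ^ α * f (x * t ^ 2)
        - t ^ n * (1 - t ^ 2) ^ α * f (y * t ^ 2)|
      ≤ ((Real.nnabs (C * (t ^ n * (1 - t ^ 2) ^ α)) : ℝ≥0) : ℝ) * |x - y|
    have hCnn : ((Real.nnabs C : ℝ≥0) : ℝ) = C := by
      rw [Real.coe_nnabs, abs_of_pos hC0]
    rw [hCnn] at hl
    have hsq : (0:ℝ) ≤ 1 - t ^ 2 := by linarith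
    have hbound : ((Real.nnabs (C * (t ^ n * (1 - t ^ 2) ^ α)) : ℝ≥0) : ℝ)
        = C * (|t ^ n| * (1 - t ^ 2) ^ α) := by
      rw [Real.coe_nnabs, abs_mul, abs_of_pos hC0, abs_mul,
        abs_of_nonneg (Real.rpow_nonneg hsq α)]
    calc |t ^ n * (1 - t ^ 2) ^ α * f (x * t ^ 2) - t ^ n * (1 - t ^ 2) ^ α * f (y * t ^ 2)|
        = |t ^ n| * (1 - t ^ 2) ^ α * |f (x * t ^ 2) - f (y * t ^ 2)| := by
          rw [← mul_sub, abs_mul, abs_mul, abs_of_nonneg (Real.rpow_nonneg hsq α)]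
      _ ≤ |t ^ n| * (1 - t ^ 2) ^ α * (C * |x * t ^ 2 - y * t ^ 2|) := by
          apply mul_le_mul_of_nonneg_left hl
          positivity
      _ = C * (|t ^ n| * (1 - t ^ 2) ^ α) * (t ^ 2 * |x - y|) := by
          rw [show x * t ^ 2 - y * t ^ 2 = (x - y) * t ^ 2 by ring, abs_mul,
            abs_of_nonneg ht2']
          ring
      _ ≤ C * (|t ^ n| * (1 - t ^ 2) ^ α) * (1 * |x - y|) := by
          apply mul_le_mul_of_nonneg_left _ (by positivity)
          exact mul_le_mul_of_nonneg_right ht2 (abs_nonneg _)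
      _ = ((Real.nnabs (C * (t ^ n * (1 - t ^ 2) ^ α)) : ℝ≥0) : ℝ) * |x - y| := by
          rw [hbound]; ring
  · -- bound integrable
    exact (integrable_aux hα n).const_mul C
  · -- pointwise derivative
    apply ae_of_all
    intro t ht
    have h1 : HasDerivAt (fun x : ℝ => x * t ^ 2) (t ^ 2) 0 := hasDerivAt_mul_const _
    have h2 : HasDerivAt f (deriv f 0) ((0:ℝ) * t ^ 2) := by
      rw [zero_mul]; exact hf0diff.hasDerivAt
    have h3 := (h2.comp 0 h1).const_mul (t ^ n * (1 - t ^ 2) ^ α)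
    refine h3.congr_deriv ?_
    ring

/-- differentiability of `g_f` at `0`.
For `f ∈ 𝓕`, `g_f(0) = 1/p` and `g_f` is differentiable at `0` with derivative
`g_f'(0) = 2(p-1)/(p²(p+2)) > 0`. -/
theorem gOf_hasDerivAt_zero
    (p : ℕ) (hp : 2 ≤ p)
    (f : ℝ → ℝ) (hf_pos : ∀ x, 0 < f x) (hf_mono : Monotone f)
    (hf_diff : ∀ᶠ x in 𝓝 (0:ℝ), DifferentiableAt ℝ f x)
    (hf_diff2 : DifferentiableAt ℝ (deriv f) 0)
    (hf0 : f 0 = 1) (hf'0 : deriv f 0 = 1) :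
    gOf p f 0 = 1 / (p:ℝ) ∧
    HasDerivAt (gOf p f) (2 * ((p:ℝ) - 1) / ((p:ℝ) ^ 2 * ((p:ℝ) + 2))) 0 ∧
    0 < 2 * ((p:ℝ) - 1) / ((p:ℝ) ^ 2 * ((p:ℝ) + 2)) := by
  have hp2 : (2:ℝ) ≤ (p:ℝ) := by exact_mod_cast hp
  set α : ℝ := ((p:ℝ) - 3) / 2 with hαdef
  have hα : -1 < α := by rw [hαdef]; linarith
  -- the three pure integrals
  set I0 : ℝ := ∫ s in (-1:ℝ)..1, (1 - s ^ 2) ^ α with hI0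
  set I2 : ℝ := ∫ s in (-1:ℝ)..1, s ^ 2 * (1 - s ^ 2) ^ α with hI2
  set I4 : ℝ := ∫ s in (-1:ℝ)..1, s ^ 4 * (1 - s ^ 2) ^ α with hI4
  have hI0eq : I0 = ∫ s in (-1:ℝ)..1, s ^ 0 * (1 - s ^ 2) ^ α := by
    rw [hI0]; simp
  -- identities
  have hid1 : I0 = (p:ℝ) * I2 := by
    have := ibp_aux hα 0
    rw [← hI0eq] at this
    norm_num at this
    rw [this, hαdef]
    have h2 : (2:ℝ) * (((p:ℝ) - 3) / 2) + 3 = (p:ℝ) := by ring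
    rw [h2]
  have hid2 : 3 * I2 = ((p:ℝ) + 2) * I4 := by
    have := ibp_aux hα 2
    norm_num at this
    rw [hI2, hI4]
    rw [this, hαdef]
    ring_nf
  -- positivity
  have hI0pos : 0 < I0 := by
    rw [hI0]
    apply intervalIntegral.intervalIntegral_pos_of_pos_on
      (by simpa using integrable_aux hα 0)
    · intro x hx
      have h1 : (0:ℝ) < 1 - x ^ 2 := by nlinarith [hx.1, hx.2]
      exact Real.rpow_pos_of_pos h1 α
    · norm_num
  have hppos : (0:ℝ) < (p:ℝ) := by linarith
  have hI2pos : 0 < I2 := by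
    have : I2 = I0 / (p:ℝ) := by rw [hid1]; field_simp
    rw [this]
    positivity
  -- the two parametric integrals and their derivatives
  have hN := hasDerivAt_aux hα f hf_mono hf_diff hf_diff2 2
  have hD0 := hasDerivAt_aux hα f hf_mono hf_diff hf_diff2 0
  rw [hf'0, one_mul] at hN hD0
  have hN' : HasDerivAt
      (fun κ : ℝ => ∫ s in (-1:ℝ)..1, s ^ 2 * (1 - s ^ 2) ^ α * f (κ * s ^ 2)) I4 0 := by
    convert hN using 2
  have hD : HasDerivAt
      (fun κ : ℝ => ∫ s in (-1:ℝ)..1, (1 - s ^ 2) ^ α * f (κ * s ^ 2)) I2 0 := by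
    have : (fun κ : ℝ => ∫ s in (-1:ℝ)..1, (1 - s ^ 2) ^ α * f (κ * s ^ 2))
        = fun κ : ℝ => ∫ s in (-1:ℝ)..1, s ^ 0 * (1 - s ^ 2) ^ α * f (κ * s ^ 2) := by
      funext κ
      congr 1
      funext s
      simp
    rw [this]
    convert hD0 using 2
  -- values at 0
  have hval : ∀ m : ℕ, (∫ s in (-1:ℝ)..1, s ^ m * (1 - s ^ 2) ^ α * f ((0:ℝ) * s ^ 2))
      = ∫ s in (-1:ℝ)..1, s ^ m * (1 - s ^ 2) ^ α := by
    intro m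
    apply intervalIntegral.integral_congr
    intro s _
    simp [hf0]
  have hN0 : (∫ s in (-1:ℝ)..1, s ^ 2 * (1 - s ^ 2) ^ α * f ((0:ℝ) * s ^ 2)) = I2 :=
    hval 2
  have hD0v : (∫ s in (-1:ℝ)..1, (1 - s ^ 2) ^ α * f ((0:ℝ) * s ^ 2)) = I0 := by
    rw [hI0eq, ← hval 0]
    apply intervalIntegral.integral_congr
    intro s _
    simp
  -- assemble
  have hD0ne : (∫ s in (-1:ℝ)..1, (1 - s ^ 2) ^ α * f ((0:ℝ) * s ^ 2)) ≠ 0 := by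
    rw [hD0v]; positivity
  have hdiv := hN'.div hD hD0ne
  have hI0ne : I0 ≠ 0 := ne_of_gt hI0pos
  have hI2ne : I2 ≠ 0 := ne_of_gt hI2pos
  have hp2ne : (p:ℝ) + 2 ≠ 0 := by positivity
  have hI4eq : I4 = 3 * I2 / ((p:ℝ) + 2) := by
    field_simp
    linarith [hid2]
  constructor
  · show (∫ s in (-1:ℝ)..1, s ^ 2 * (1 - s ^ 2) ^ α * f ((0:ℝ) * s ^ 2)) /
      (∫ s in (-1:ℝ)..1, (1 - s ^ 2) ^ α * f ((0:ℝ) * s ^ 2)) = 1 / (p:ℝ)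
    rw [hN0, hD0v, hid1]
    field_simp
  refine ⟨?_, ?_⟩
  · have heq : (I4 * (∫ s in (-1:ℝ)..1, (1 - s ^ 2) ^ α * f ((0:ℝ) * s ^ 2))
        - (∫ s in (-1:ℝ)..1, s ^ 2 * (1 - s ^ 2) ^ α * f ((0:ℝ) * s ^ 2)) * I2) /
        (∫ s in (-1:ℝ)..1, (1 - s ^ 2) ^ α * f ((0:ℝ) * s ^ 2)) ^ 2
        = 2 * ((p:ℝ) - 1) / ((p:ℝ) ^ 2 * ((p:ℝ) + 2)) := by
      rw [hN0, hD0v, hI4eq, hid1]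
      field_simp
      ring
    rw [← heq]
    exact hdiv
  · apply div_pos
    · linarith
    · positivity
end
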